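/- The family of maps τ_z acts simply transitively on ℝ⁴: for all x, x̃ ∈ ℝ⁴ there exists a unique z ∈ ℝ⁴ such that τ_z(x) = x̃. -/
import Mathlib


/-- The transformation `τ_z : ℝ⁴ → ℝ⁴` (indices `0,…,3` for coordinates `1,…,4`). -/
noncomputable def τ (k : ℝ) (z x : Fin 4 → ℝ) : Fin 4 → ℝ :=
  ![x 0 - z 0 + 2 * z 3 - k * Real.exp (k * z 3 / 2) * z 2 * x 3,
    x 1 - z 3,
    x 2 * Real.exp (-(k * z 3) / 2) - z 2,
    x 3 * Real.exp (k * z 3 / 2) - z 1]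

/-- The family `τ_z` acts simply transitively on `ℝ⁴`: for all
`x, x̃ ∈ ℝ⁴` there is a unique `z ∈ ℝ⁴` with `τ_z x = x̃`. -/
theorem tau_simply_transitive (k : ℝ) (hk : 0 < k) (x xt : Fin 4 → ℝ) :
    ∃! z : Fin 4 → ℝ, τ k z x = xt := by
  set z3 : ℝ := x 1 - xt 1 with hz3
  set z2 : ℝ := x 2 * Real.exp (-(k * z3) / 2) - xt 2 with hz2
  set z1 : ℝ := x 3 * Real.exp (k * z3 / 2) - xt 3 with hz1
  set z0 : ℝ := x 0 + 2 * z3 - k * Real.exp (k * z3 / 2) * z2 * x 3 - xt 0 with hz0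
  refine ⟨![z0, z1, z2, z3], ?_, ?_⟩
  · funext i
    fin_cases i <;> simp [τ, hz0, hz1, hz2, hz3] <;> ring
  · intro w hw
    have h1 : w 3 = z3 := by
      have := congrFun hw 1
      simp [τ] at this
      rw [hz3, ← this]; ring
    have h2 : w 2 = z2 := by
      have := congrFun hw 2
      simp [τ] at this
      rw [hz2, h1] at *
      linarith [this]
    have h0 : w 1 = z1 := by
      have := congrFun hw 3
      simp [τ] at this
      rw [hz1, h1] at *
      linarith [this]
    have hh : w 0 = z0 := by
      have := congrFun hw 0
      simp [τ, h1, h2] at this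
      rw [hz0]
      linarith [this]
    funext i
    fin_cases i <;> simp [hh, h0, h2, h1]
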